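/- arXiv:0710.4885 — 4 statements merged into one kernel-verified Lean document; each statement's English description precedes it below -/
import Mathlib

section
/- Let R be a commutative ring, n and m natural numbers with m ≤ n, and B an n × n matrix over R. Then det(B) equals the sum, over all subsets T of {0, 1, …, n−1} of cardinality m, of (−1)^(m(m−1)/2 + Σ_{j∈T} j) · det(B restricted to rows {0, …, m−1} and columns T, with columns taken in increasing order) · det(B restricted to rows {m, …, n−1} and columns {0,…,n−1} \ T, with columns taken in increasing order). (Laplace expansion by complementary minors along the first m rows; this is the precise form of the paper's Lemma 1.) -/
open Finset Equiv

namespace LaplaceAux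

variable {n m : ℕ}

/-- The canonical "block" equivalence `Fin m ⊕ Fin (n-m) ≃ Fin n`. -/
noncomputable def rowEquiv (hm : m ≤ n) : Fin m ⊕ Fin (n - m) ≃ Fin n :=
  Equiv.ofBijective
    (Sum.elim (Fin.castLE hm) (fun b => (⟨m + (b : ℕ), Nat.add_lt_of_lt_sub' b.isLt⟩ : Fin n)))
    (by
      rw [Fintype.bijective_iff_injective_and_card]
      constructor
      · rintro (a | a) (b | b) h <;>
          simp only [Sum.elim_inl, Sum.elim_inr, Fin.castLE] at h <;>
          [skip; skip; skip; skip] <;>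
          first
          | (simp only [Sum.inl.injEq, Sum.inr.injEq]; exact Fin.ext (by
              have := congrArg Fin.val h
              simp at this; omega))
          | (exfalso
             have := congrArg Fin.val h
             simp at this
             omega)
      · simp; omega)

@[simp] lemma rowEquiv_inl (hm : m ≤ n) (a : Fin m) :
    rowEquiv hm (Sum.inl a) = Fin.castLE hm a := rfl

@[simp] lemma rowEquiv_inr (hm : m ≤ n) (b : Fin (n - m)) :
    rowEquiv hm (Sum.inr b) = (⟨m + (b : ℕ), Nat.add_lt_of_lt_sub' b.isLt⟩ : Fin n) := rfl

lemma card_compl_of_card {T : Finset (Fin n)} (hT : T.card = m) : Tᶜ.card = n - m := by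
  simp [Finset.card_compl, hT]

/-- The column equivalence attached to a subset `T` of size `m`. -/
noncomputable def colEquiv (hm : m ≤ n) (T : Finset (Fin n)) (hT : T.card = m) :
    Fin m ⊕ Fin (n - m) ≃ Fin n :=
  Equiv.ofBijective
    (Sum.elim (T.orderEmbOfFin hT) (Tᶜ.orderEmbOfFin (card_compl_of_card hT)))
    (by
      rw [Fintype.bijective_iff_injective_and_card]
      constructor
      · rintro (a | a) (b | b) h <;> simp only [Sum.elim_inl, Sum.elim_inr] at h
        · simp [ (T.orderEmbOfFin hT).injective h ]
        · exfalso
          have h1 : T.orderEmbOfFin hT a ∈ T := Finset.orderEmbOfFin_mem _ _ _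
          have h2 : Tᶜ.orderEmbOfFin (card_compl_of_card hT) b ∈ Tᶜ :=
            Finset.orderEmbOfFin_mem _ _ _
          rw [h] at h1
          exact (Finset.mem_compl.mp h2) h1
        · exfalso
          have h1 : T.orderEmbOfFin hT b ∈ T := Finset.orderEmbOfFin_mem _ _ _
          have h2 : Tᶜ.orderEmbOfFin (card_compl_of_card hT) a ∈ Tᶜ :=
            Finset.orderEmbOfFin_mem _ _ _
          rw [h] at h2
          exact (Finset.mem_compl.mp h2) h1
        · simp [ (Tᶜ.orderEmbOfFin (card_compl_of_card hT)).injective h ]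
      · have hmn : m ≤ n := hT ▸ (Finset.card_le_card (Finset.subset_univ T)).trans (by simp)
        simp; omega)

@[simp] lemma colEquiv_inl (hm : m ≤ n) (T : Finset (Fin n)) (hT : T.card = m) (a : Fin m) :
    colEquiv hm T hT (Sum.inl a) = T.orderEmbOfFin hT a := rfl

@[simp] lemma colEquiv_inr (hm : m ≤ n) (T : Finset (Fin n)) (hT : T.card = m) (b : Fin (n - m)) :
    colEquiv hm T hT (Sum.inr b) = Tᶜ.orderEmbOfFin (card_compl_of_card hT) b := rfl

/-- The "sorting" permutation attached to `T`. -/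
noncomputable def piT (hm : m ≤ n) (T : Finset (Fin n)) (hT : T.card = m) : Equiv.Perm (Fin n) :=
  (rowEquiv hm).symm.trans (colEquiv hm T hT)


/-- Moving one element of a finset down by one changes the order embedding by a swap. -/
lemma orderEmbOfFin_swap {k : ℕ} {S S' : Finset (Fin n)} (hS : S.card = k) (hS' : S'.card = k)
    {u v : Fin n} (huv : (u : ℕ) + 1 = (v : ℕ)) (hu : u ∉ S) (hv : v ∈ S)
    (hE : S' = insert u (S.erase v)) (a : Fin k) :
    S.orderEmbOfFin hS a = Equiv.swap u v (S'.orderEmbOfFin hS' a) := by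
  have hune : u ≠ v := fun h => by rw [h] at huv; omega
  have hvS' : v ∉ S' := by
    rw [hE]
    simp [Finset.mem_insert, Finset.mem_erase, hune.symm]
  have hmem : ∀ x, x ∈ S' → x ≠ u → x ∈ S ∧ x ≠ v := by
    intro x hx hxu
    rw [hE, Finset.mem_insert] at hx
    rcases hx with h | h
    · exact absurd h hxu
    · exact ⟨(Finset.mem_erase.mp h).2, (Finset.mem_erase.mp h).1⟩
  have key : (fun a => Equiv.swap u v (S'.orderEmbOfFin hS' a)) = S.orderEmbOfFin hS := by
    apply Finset.orderEmbOfFin_unique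
    · intro x
      by_cases hx : S'.orderEmbOfFin hS' x = u
      · rw [hx, Equiv.swap_apply_left]; exact hv
      · obtain ⟨h1, h2⟩ := hmem _ (Finset.orderEmbOfFin_mem _ _ _) hx
        rw [Equiv.swap_apply_of_ne_of_ne hx h2]; exact h1
    · intro a b hab
      dsimp only
      have hmono := (S'.orderEmbOfFin hS').strictMono hab
      set x := S'.orderEmbOfFin hS' a with hxdef
      set y := S'.orderEmbOfFin hS' b with hydef
      have hxS' : x ∈ S' := Finset.orderEmbOfFin_mem _ _ _
      have hyS' : y ∈ S' := Finset.orderEmbOfFin_mem _ _ _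
      by_cases hxu : x = u
      · -- swap x = v; y ≠ u (since y > x = u), y ≠ v, so swap y = y and y > v
        have hyu : y ≠ u := fun h => by rw [hxu, h] at hmono; exact lt_irrefl _ hmono
        have hyv : y ≠ v := fun h => hvS' (h ▸ hyS')
        rw [hxu, Equiv.swap_apply_left, Equiv.swap_apply_of_ne_of_ne hyu hyv]
        have h1 : (u : ℕ) < (y : ℕ) := by rw [← hxu]; exact hmono
        have h2 : (y : ℕ) ≠ (v : ℕ) := fun h => hyv (Fin.ext h)
        exact Fin.lt_def.mpr (by omega)
      · obtain ⟨hxS, hxv⟩ := hmem _ hxS' hxu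
        rw [Equiv.swap_apply_of_ne_of_ne hxu hxv]
        by_cases hyu : y = u
        · -- swap y = v > u = y > x
          rw [hyu, Equiv.swap_apply_left]
          have : (x : ℕ) < (u : ℕ) := by rw [← hyu]; exact hmono
          exact Fin.lt_def.mpr (by omega)
        · obtain ⟨hyS, hyv⟩ := hmem _ hyS' hyu
          rw [Equiv.swap_apply_of_ne_of_ne hyu hyv]
          exact hmono
  exact (congrFun key a).symm

/-- A "downward closed" finset in `Fin n` consists of the first `card` elements. -/
lemma val_lt_card_of_closed {T : Finset (Fin n)}
    (h : ∀ v ∈ T, ∀ u : Fin n, (u : ℕ) + 1 = (v : ℕ) → u ∈ T) :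
    ∀ j ∈ T, (j : ℕ) < T.card := by
  have key : ∀ d : ℕ, ∀ j : Fin n, j ∈ T → ∀ i : Fin n, (i : ℕ) + d = (j : ℕ) → i ∈ T := by
    intro d
    induction d with
    | zero =>
      intro j hj i hi
      have : i = j := Fin.ext (by omega)
      rwa [this]
    | succ d ih =>
      intro j hj i hi
      have hj0 : 0 < (j : ℕ) := by omega
      have hu : (⟨(j : ℕ) - 1, by omega⟩ : Fin n) ∈ T := h j hj _ (by simp; omega)
      exact ih _ hu i (by simp; omega)
  intro j hj
  have hsub : Finset.Iic j ⊆ T := by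
    intro i hi
    have hij0 : i ≤ j := Finset.mem_Iic.mp hi
    have hij : (i : ℕ) ≤ (j : ℕ) := hij0
    exact key ((j : ℕ) - (i : ℕ)) j hj i (by omega)
  have hcard := Finset.card_le_card hsub
  rw [Fin.card_Iic] at hcard
  omega


lemma sign_piT (hm : m ≤ n) (N : ℕ) :
    ∀ (T : Finset (Fin n)) (hT : T.card = m), (∑ j ∈ T, (j : ℕ)) = N →
      Equiv.Perm.sign (piT hm T hT) = (-1) ^ (m * (m - 1) / 2 + N) := by
  induction N using Nat.strong_induction_on with
  | _ N ih =>
    intro T hT hsum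
    by_cases hc : ∀ v ∈ T, ∀ u : Fin n, (u : ℕ) + 1 = (v : ℕ) → u ∈ T
    · -- base case: T is downward closed, hence T = image of castLE, and piT = 1
      have hlt : ∀ j ∈ T, (j : ℕ) < m := by
        intro j hj; have := val_lt_card_of_closed hc j hj; omega
      have hinj : Function.Injective (Fin.castLE hm) := fun a b h => Fin.ext (by
        have := congrArg Fin.val h; simpa using this)
      have hTeq : T = Finset.image (Fin.castLE hm) Finset.univ := by
        apply Finset.eq_of_subset_of_card_le
        · intro j hj
          rw [Finset.mem_image]
          exact ⟨⟨(j : ℕ), hlt j hj⟩, Finset.mem_univ _, Fin.ext rfl⟩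
        · rw [Finset.card_image_of_injective _ hinj, Finset.card_univ, Fintype.card_fin, hT]
      have hmemT : ∀ a : Fin m, Fin.castLE hm a ∈ T := by
        intro a; rw [hTeq, Finset.mem_image]; exact ⟨a, Finset.mem_univ _, rfl⟩
      have he : (fun a => Fin.castLE hm a) = T.orderEmbOfFin hT :=
        Finset.orderEmbOfFin_unique hT hmemT (fun a b h => h)
      have hf : (fun b : Fin (n - m) => (⟨m + (b : ℕ), Nat.add_lt_of_lt_sub' b.isLt⟩ : Fin n)) =
          Tᶜ.orderEmbOfFin (card_compl_of_card hT) := by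
        apply Finset.orderEmbOfFin_unique
        · intro b
          rw [Finset.mem_compl]
          intro hmem
          have := hlt _ hmem
          simp at this
        · intro a b h
          simp only [Fin.lt_def] at h ⊢
          omega
      have hpi : piT hm T hT = 1 := by
        apply Equiv.ext
        intro x
        have hx : rowEquiv hm ((rowEquiv hm).symm x) = x := Equiv.apply_symm_apply _ _
        simp only [piT, Equiv.trans_apply, Equiv.Perm.one_apply]
        rcases hy : (rowEquiv hm).symm x with a | a
        · rw [hy] at hx
          rw [colEquiv_inl, ← congrFun he a]
          rw [rowEquiv_inl] at hx
          exact hx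
        · rw [hy] at hx
          rw [colEquiv_inr, ← congrFun hf a]
          rw [rowEquiv_inr] at hx
          exact hx
      have hN : N = m * (m - 1) / 2 := by
        rw [← hsum, hTeq, Finset.sum_image (fun a _ b _ h => hinj h)]
        have : ∀ a : Fin m, ((Fin.castLE hm a : Fin n) : ℕ) = (a : ℕ) := fun a => rfl
        simp_rw [this]
        rw [Fin.sum_univ_eq_sum_range (fun i => i) m, Finset.sum_range_id]
      rw [hpi, hN, map_one, ← two_mul, pow_mul]
      norm_num
    · -- inductive step
      push_neg at hc
      obtain ⟨v, hvT, u, huv, huT⟩ := hc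
      have hune : u ≠ v := fun h => by rw [h] at huv; omega
      set T' := insert u (T.erase v) with hT'def
      have huerase : u ∉ T.erase v := fun h => huT (Finset.mem_erase.mp h).2
      have hm1 : 1 ≤ m := by
        rw [← hT]
        exact Finset.card_pos.mpr ⟨v, hvT⟩
      have hT' : T'.card = m := by
        rw [hT'def, Finset.card_insert_of_notMem huerase, Finset.card_erase_of_mem hvT, hT]
        omega
      have hsumT : (v : ℕ) + ∑ j ∈ T.erase v, (j : ℕ) = N := by
        rw [← hsum]
        exact Finset.add_sum_erase _ _ hvT
      have hsum' : (∑ j ∈ T', (j : ℕ)) + 1 = N := by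
        rw [hT'def, Finset.sum_insert huerase]
        omega
      have hvT' : v ∉ T' := by
        rw [hT'def]
        simp [Finset.mem_insert, Finset.mem_erase, hune.symm]
      have huT' : u ∈ T' := Finset.mem_insert_self _ _
      have hE : Tᶜ = insert u (T'ᶜ.erase v) := by
        ext x
        simp only [Finset.mem_compl, Finset.mem_insert, Finset.mem_erase, hT'def]
        constructor
        · intro hx
          by_cases hxu : x = u
          · exact Or.inl hxu
          · refine Or.inr ⟨fun hxv => hx (hxv ▸ hvT), fun h => ?_⟩
            rcases h with h | ⟨h1, h2⟩
            · exact hxu h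
            · exact hx h2
        · rintro (h | ⟨h1, h2⟩)
          · exact h ▸ huT
          · intro hxT
            exact h2 (Or.inr ⟨h1, hxT⟩)
      have key : ∀ y : Fin m ⊕ Fin (n - m),
          colEquiv hm T hT y = Equiv.swap u v (colEquiv hm T' hT' y) := by
        rintro (a | a)
        · rw [colEquiv_inl, colEquiv_inl]
          exact orderEmbOfFin_swap hT hT' huv huT hvT hT'def a
        · rw [colEquiv_inr, colEquiv_inr]
          have huc : u ∉ T'ᶜ := fun h => (Finset.mem_compl.mp h) huT'
          have hvc : v ∈ T'ᶜ := Finset.mem_compl.mpr hvT'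
          have h2 := orderEmbOfFin_swap (card_compl_of_card hT') (card_compl_of_card hT)
            huv huc hvc hE a
          rw [h2, Equiv.swap_apply_self]
      have hpi : piT hm T hT = Equiv.swap u v * piT hm T' hT' := by
        apply Equiv.ext
        intro x
        rw [Equiv.Perm.mul_apply]
        exact key ((rowEquiv hm).symm x)
      have hN1 : 1 ≤ N := by omega
      rw [hpi, map_mul, Equiv.Perm.sign_swap hune,
        ih (N - 1) (by omega) T' hT' (by omega)]
      have hexp : m * (m - 1) / 2 + N = (m * (m - 1) / 2 + (N - 1)) + 1 := by omega
      rw [hexp, pow_succ, mul_comm]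


lemma mem_iff_exists {T : Finset (Fin n)} (hT : T.card = m) (t : Fin n) :
    t ∈ T ↔ ∃ a, T.orderEmbOfFin hT a = t := by
  constructor
  · intro ht
    have h : t ∈ Set.range (T.orderEmbOfFin hT) := by
      rw [Finset.range_orderEmbOfFin]; exact ht
    exact h
  · rintro ⟨a, rfl⟩; exact Finset.orderEmbOfFin_mem _ _ _

end LaplaceAux

open LaplaceAux in
/-- **Laplace expansion by complementary minors along the first `m` rows.**
For an `n × n` matrix `B` over a commutative ring `R` and `m ≤ n`,
`det B` is the sum over all column subsets `T` of cardinality `m` of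
`(-1) ^ (m(m-1)/2 + Σ_{j ∈ T} j)` times the minor of `B` on the first `m` rows
and the columns `T` (in increasing order), times the minor of `B` on the last
`n - m` rows and the complementary columns `Tᶜ` (in increasing order). -/
theorem laplace_expansion_first_rows (R : Type*) [CommRing R] (n m : ℕ) (hm : m ≤ n)
    (B : Matrix (Fin n) (Fin n) R) :
    B.det =
      ∑ T ∈ (Finset.powersetCard m (Finset.univ : Finset (Fin n))).attach,
        (-1 : R) ^ (m * (m - 1) / 2 + ∑ j ∈ T.1, (j : ℕ)) *
          (B.submatrix (Fin.castLE hm)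
              (T.1.orderEmbOfFin ((Finset.mem_powersetCard.mp T.2).2))).det *
          (B.submatrix
              (fun i : Fin (n - m) => (⟨m + (i : ℕ), by have := i.isLt; omega⟩ : Fin n))
              ((T.1)ᶜ.orderEmbOfFin (by
                have h := (Finset.mem_powersetCard.mp T.2).2
                simp [Finset.card_compl, h]))).det := by
  classical
  have hcard : ∀ T : {T // T ∈ Finset.powersetCard m (Finset.univ : Finset (Fin n))},
      T.1.card = m := fun T => (Finset.mem_powersetCard.mp T.2).2
  set Ψ : (Σ _T : {T // T ∈ Finset.powersetCard m (Finset.univ : Finset (Fin n))},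
      Equiv.Perm (Fin m) × Equiv.Perm (Fin (n - m))) → Equiv.Perm (Fin n) := fun x =>
    ((rowEquiv hm).symm.trans ((Equiv.sumCongr x.2.1 x.2.2).trans
      (colEquiv hm x.1.1 (hcard x.1)))) with hΨdef
  have hinj : Function.Injective Ψ := by
    rintro ⟨T, α, β⟩ ⟨T2, α2, β2⟩ h
    have happ : ∀ z, colEquiv hm T.1 (hcard T) ((Equiv.sumCongr α β) z)
        = colEquiv hm T2.1 (hcard T2) ((Equiv.sumCongr α2 β2) z) := by
      intro z
      have h2 := congrArg (fun σ : Equiv.Perm (Fin n) => σ (rowEquiv hm z)) h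
      simpa [hΨdef, Equiv.trans_apply, Equiv.symm_apply_apply] using h2
    have hTeq : T = T2 := by
      apply Subtype.ext
      ext t
      rw [mem_iff_exists (hcard T) t, mem_iff_exists (hcard T2) t]
      constructor
      · rintro ⟨a, rfl⟩
        refine ⟨α2 (α.symm a), ?_⟩
        have h3 := happ (Sum.inl (α.symm a))
        simp only [Equiv.sumCongr_apply, Sum.map_inl, colEquiv_inl,
          Equiv.apply_symm_apply] at h3
        exact h3.symm
      · rintro ⟨a, rfl⟩
        refine ⟨α (α2.symm a), ?_⟩
        have h3 := happ (Sum.inl (α2.symm a))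
        simp only [Equiv.sumCongr_apply, Sum.map_inl, colEquiv_inl,
          Equiv.apply_symm_apply] at h3
        exact h3
    subst hTeq
    have hα : α = α2 := by
      apply Equiv.ext; intro a
      have h3 := happ (Sum.inl a)
      simp only [Equiv.sumCongr_apply, Sum.map_inl, colEquiv_inl] at h3
      exact (T.1.orderEmbOfFin (hcard T)).injective h3
    have hβ : β = β2 := by
      apply Equiv.ext; intro b
      have h3 := happ (Sum.inr b)
      simp only [Equiv.sumCongr_apply, Sum.map_inr, colEquiv_inr] at h3
      exact ((T.1)ᶜ.orderEmbOfFin (card_compl_of_card (hcard T))).injective h3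
    subst hα; subst hβ; rfl
  have hbij : Function.Bijective Ψ := by
    rw [Fintype.bijective_iff_injective_and_card]
    refine ⟨hinj, ?_⟩
    rw [Fintype.card_sigma]
    simp only [Fintype.card_prod, Fintype.card_perm, Fintype.card_fin, Finset.sum_const,
      smul_eq_mul]
    rw [Finset.card_univ, Fintype.card_coe, Finset.card_powersetCard, Finset.card_univ,
      Fintype.card_fin]
    have h := Nat.choose_mul_factorial_mul_factorial hm
    calc n.choose m * (m.factorial * (n - m).factorial)
        = n.choose m * m.factorial * (n - m).factorial := by ring
      _ = n.factorial := h
  have hdet : ∀ (p : ℕ) (M : Matrix (Fin p) (Fin p) R),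
      M.det = ∑ τ : Equiv.Perm (Fin p), ((Equiv.Perm.sign τ : ℤ) : R) * ∏ i, M i (τ i) := by
    intro p M
    rw [← Matrix.det_transpose M, Matrix.det_apply']
    simp only [Matrix.transpose_apply]
  rw [hdet n B, ← Function.Bijective.sum_comp hbij
    (fun σ => ((Equiv.Perm.sign σ : ℤ) : R) * ∏ i, B i (σ i)),
    ← Finset.univ_sigma_univ, Finset.sum_sigma, Finset.univ_eq_attach]
  apply Finset.sum_congr rfl
  intro T _
  rw [Fintype.sum_prod_type]
  -- evaluate the sign of `Ψ ⟨T, (α, β)⟩`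
  have hfact : ∀ (α : Equiv.Perm (Fin m)) (β : Equiv.Perm (Fin (n - m))),
      Ψ ⟨T, (α, β)⟩ = piT hm T.1 (hcard T) *
        Equiv.permCongr (rowEquiv hm) (Equiv.sumCongr α β) := by
    intro α β
    apply Equiv.ext; intro x
    simp [hΨdef, piT, Equiv.Perm.mul_apply, Equiv.trans_apply, Equiv.permCongr_apply,
      Equiv.symm_apply_apply]
  have hsigneval : ∀ (α : Equiv.Perm (Fin m)) (β : Equiv.Perm (Fin (n - m))),
      ((Equiv.Perm.sign (Ψ ⟨T, (α, β)⟩) : ℤ) : R) =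
        (-1 : R) ^ (m * (m - 1) / 2 + ∑ j ∈ T.1, (j : ℕ)) *
          (((Equiv.Perm.sign α : ℤ) : R) * ((Equiv.Perm.sign β : ℤ) : R)) := by
    intro α β
    rw [hfact α β, map_mul, Equiv.Perm.sign_permCongr, Equiv.Perm.sign_sumCongr,
      sign_piT hm _ T.1 (hcard T) rfl]
    push_cast
    ring
  have hprodeval : ∀ (α : Equiv.Perm (Fin m)) (β : Equiv.Perm (Fin (n - m))),
      (∏ i, B i ((Ψ ⟨T, (α, β)⟩) i)) =
        (∏ a, B (Fin.castLE hm a) (T.1.orderEmbOfFin (hcard T) (α a))) *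
        (∏ b : Fin (n - m), B (⟨m + (b : ℕ), by have := b.isLt; omega⟩ : Fin n)
          ((T.1)ᶜ.orderEmbOfFin (card_compl_of_card (hcard T)) (β b))) := by
    intro α β
    rw [← Equiv.prod_comp (rowEquiv hm) (fun i => B i ((Ψ ⟨T, (α, β)⟩) i)),
      Fintype.prod_sum_type]
    congr 1
    · apply Finset.prod_congr rfl; intro a _
      have hz : (rowEquiv hm).symm (Fin.castLE hm a) = Sum.inl a := by
        rw [← rowEquiv_inl hm a, Equiv.symm_apply_apply]
      simp [hΨdef, Equiv.trans_apply, hz]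
    · apply Finset.prod_congr rfl; intro b _
      have hz : (rowEquiv hm).symm (⟨m + (b : ℕ), by have := b.isLt; omega⟩ : Fin n)
          = Sum.inr b := by
        rw [← rowEquiv_inr hm b, Equiv.symm_apply_apply]
      simp [hΨdef, Equiv.trans_apply, hz]
  rw [hdet m _, hdet (n - m) _, mul_assoc, Finset.sum_mul_sum, Finset.mul_sum]
  apply Finset.sum_congr rfl
  intro α _
  rw [Finset.mul_sum]
  apply Finset.sum_congr rfl
  intro β _
  rw [hsigneval α β, hprodeval α β]
  simp only [Matrix.submatrix_apply]
  ring
end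

section
/- Let R be a commutative ring, n, m, k, l natural numbers with m ≤ n and k ≤ l ≤ n, and B an n × n matrix over R such that B i j = 0 whenever i < m and j ≥ l, and B i j = 0 whenever i ≥ m and j < k. Then det(B) equals the sum, over all subsets T of {0, …, n−1} of cardinality m satisfying {0, …, k−1} ⊆ T ⊆ {0, …, l−1}, of (−1)^(m(m−1)/2 + Σ_{j∈T} j) · det(B[{0,…,m−1}, T]) · det(B[{m,…,n−1}, Tᶜ]). (The paper's Lemma 1: the only column subsets contributing to the Laplace expansion are those containing all of the first k columns and contained in the first l columns.) -/
namespace LaplaceAux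

open Equiv Finset Matrix

variable {n : ℕ}

def rowE (m : ℕ) (hm : m ≤ n) : Fin m ⊕ Fin (n - m) ≃ Fin n :=
  finSumFinEquiv.trans (finCongr (Nat.add_sub_cancel' hm))

lemma rowE_inl (m : ℕ) (hm : m ≤ n) (a : Fin m) :
    rowE m hm (Sum.inl a) = Fin.castLE hm a := by
  ext; simp [rowE]

lemma rowE_inr (m : ℕ) (hm : m ≤ n) (b : Fin (n - m)) :
    rowE m hm (Sum.inr b) = ⟨m + (b : ℕ), by omega⟩ := by
  ext; simp [rowE]

lemma card_compl_eq (T : Finset (Fin n)) {m : ℕ} (hT : T.card = m) : Tᶜ.card = n - m := by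
  simp [card_compl, hT]

def colE (m : ℕ) (hm : m ≤ n) (T : Finset (Fin n)) (hT : T.card = m) :
    Fin m ⊕ Fin (n - m) ≃ Fin n :=
  (Equiv.sumCongr (T.orderIsoOfFin hT).toEquiv
    (((Tᶜ).orderIsoOfFin (card_compl_eq T hT)).toEquiv.trans
      (Equiv.subtypeEquivRight (fun x => Finset.mem_compl)))).trans
    (Equiv.sumCompl (· ∈ T))

lemma colE_inl (m : ℕ) (hm : m ≤ n) (T : Finset (Fin n)) (hT : T.card = m) (a : Fin m) :
    colE m hm T hT (Sum.inl a) = T.orderEmbOfFin hT a := by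
  simp [colE, ← Finset.coe_orderIsoOfFin_apply]

lemma colE_inr (m : ℕ) (hm : m ≤ n) (T : Finset (Fin n)) (hT : T.card = m) (b : Fin (n - m)) :
    colE m hm T hT (Sum.inr b) = (Tᶜ).orderEmbOfFin (card_compl_eq T hT) b := by
  simp [colE, ← Finset.coe_orderIsoOfFin_apply]

def rho (m : ℕ) (hm : m ≤ n) (T : Finset (Fin n)) (hT : T.card = m) : Perm (Fin n) :=
  (rowE m hm).symm.trans (colE m hm T hT)

end LaplaceAux

namespace LaplaceAux
open Equiv Finset Matrix
variable {n : ℕ}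

lemma filter_lt_eq_map (m : ℕ) (hm : m ≤ n) :
    (univ.filter fun j : Fin n => (j : ℕ) < m) = (univ : Finset (Fin m)).map (Fin.castLEEmb hm) := by
  ext j
  simp only [mem_filter, mem_univ, true_and, mem_map]
  constructor
  · intro h; exact ⟨⟨j, h⟩, rfl⟩
  · rintro ⟨a, -, rfl⟩; simpa [Fin.castLEEmb] using a.isLt

lemma filter_lt_card (m : ℕ) (hm : m ≤ n) :
    (univ.filter fun j : Fin n => (j : ℕ) < m).card = m := by
  rw [filter_lt_eq_map m hm]; simp

lemma filter_lt_sum (m : ℕ) (hm : m ≤ n) :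
    (∑ j ∈ univ.filter fun j : Fin n => (j : ℕ) < m, (j : ℕ)) = m * (m - 1) / 2 := by
  rw [filter_lt_eq_map m hm, Finset.sum_map]
  rw [show (∑ a : Fin m, ((Fin.castLEEmb hm a : Fin n) : ℕ)) = ∑ a : Fin m, (a : ℕ) by
    simp [Fin.castLEEmb], Fin.sum_univ_eq_sum_range (fun i => i) m]
  exact Finset.sum_range_id m

lemma rho_base (m : ℕ) (hm : m ≤ n) :
    rho m hm (univ.filter fun j : Fin n => (j : ℕ) < m) (filter_lt_card m hm) = Equiv.refl _ := by
  have hcol : colE m hm _ (filter_lt_card m hm) = rowE m hm := by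
    apply Equiv.ext
    rintro (a | b)
    · rw [colE_inl, rowE_inl]
      have : (Fin.castLE hm : Fin m → Fin n) =
          Finset.orderEmbOfFin _ (filter_lt_card m hm) := by
        apply Finset.orderEmbOfFin_unique
        · intro x; simp only [mem_filter, mem_univ, true_and, Fin.coe_castLE]; exact x.isLt
        · intro i j hij; simp only [Fin.lt_def] at hij ⊢; exact hij
      rw [← this]
    · rw [colE_inr, rowE_inr]
      have : (fun b : Fin (n - m) => (⟨m + (b : ℕ), by omega⟩ : Fin n)) =
          Finset.orderEmbOfFin _ (card_compl_eq _ (filter_lt_card m hm)) := by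
        apply Finset.orderEmbOfFin_unique
        · intro x
          simp only [Finset.mem_compl, mem_filter, mem_univ, true_and, not_lt]
          omega
        · intro i j hij; simp only [Fin.lt_def] at hij ⊢; omega
      rw [← this]
  rw [rho, hcol]
  exact (rowE m hm).symm_trans_self

end LaplaceAux

namespace LaplaceAux
open Equiv Finset Matrix
variable {n : ℕ}

lemma exists_gap {T : Finset (Fin n)} {m : ℕ} (hT : T.card = m) (hm : m ≤ n)
    (hne : T ≠ univ.filter fun j : Fin n => (j : ℕ) < m) :
    ∃ t ∈ T, 0 < (t : ℕ) ∧ (⟨(t : ℕ) - 1, by omega⟩ : Fin n) ∉ T := by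
  by_contra hcon
  push_neg at hcon
  have hdown : ∀ t ∈ T, ∀ d : ℕ, ∀ hd : d ≤ (t : ℕ),
      (⟨(t : ℕ) - d, by omega⟩ : Fin n) ∈ T := by
    intro t ht d
    induction d with
    | zero => intro _; simpa using ht
    | succ d ih =>
      intro hd
      have h1 := ih (by omega)
      have h2 := hcon _ h1 (by simp; omega)
      have : (⟨(t : ℕ) - (d + 1), by omega⟩ : Fin n) =
          ⟨((⟨(t : ℕ) - d, by omega⟩ : Fin n) : ℕ) - 1, by omega⟩ := by
        apply Fin.ext; simp; omega
      rw [this]; exact h2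
  apply hne
  have hsub : T ⊆ univ.filter fun j : Fin n => (j : ℕ) < m := by
    intro x hx
    simp only [mem_filter, mem_univ, true_and]
    by_contra hxm
    push_neg at hxm
    have hS : (Finset.range ((x : ℕ) + 1)).attachFin
        (fun i hi => by simp at hi; omega) ⊆ T := by
      intro s hs
      rw [Finset.mem_attachFin, Finset.mem_range] at hs
      have := hdown x hx ((x : ℕ) - (s : ℕ)) (by omega)
      have he : s = (⟨(x : ℕ) - ((x : ℕ) - (s : ℕ)), by omega⟩ : Fin n) := by
        apply Fin.ext; simp; omega
      rw [he]; exact this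
    have := Finset.card_le_card hS
    rw [Finset.card_attachFin, Finset.card_range, hT] at this
    omega
  exact Finset.eq_of_subset_of_card_le hsub (by rw [filter_lt_card m hm, hT])

end LaplaceAux

namespace LaplaceAux
open Equiv Finset Matrix
variable {n : ℕ}

lemma sign_rho (m : ℕ) (hm : m ≤ n) :
    ∀ N (T : Finset (Fin n)) (hT : T.card = m), (∑ j ∈ T, (j : ℕ)) = N →
      Equiv.Perm.sign (rho m hm T hT) = (-1) ^ (m * (m - 1) / 2 + N) := by
  intro N
  induction N using Nat.strong_induction_on with
  | _ N ih =>
    intro T hT hsum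
    by_cases hbase : T = univ.filter fun j : Fin n => (j : ℕ) < m
    · subst hbase
      have h1 : rho m hm _ hT = Equiv.refl (Fin n) := rho_base m hm
      rw [h1]
      have h2 : N = m * (m - 1) / 2 := by rw [← hsum]; exact filter_lt_sum m hm
      rw [h2, Equiv.Perm.sign_refl]
      exact (Even.neg_one_pow ⟨_, rfl⟩).symm
    · obtain ⟨t, ht, ht0, htp⟩ := exists_gap hT hm hbase
      set t' : Fin n := ⟨(t : ℕ) - 1, by omega⟩ with ht'
      have ht'val : (t' : ℕ) = (t : ℕ) - 1 := rfl
      have htt' : t' ≠ t := by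
        intro h; rw [Fin.ext_iff] at h; omega
      set T2 : Finset (Fin n) := insert t' (T.erase t) with hT2def
      have hmem2 : ∀ y : Fin n, y ∈ T2 ↔ y = t' ∨ (y ∈ T ∧ y ≠ t) := by
        intro y; rw [hT2def, Finset.mem_insert, Finset.mem_erase]; tauto
      have ht'2 : t' ∈ T2 := by rw [hmem2]; left; rfl
      have hT2 : T2.card = m := by
        rw [hT2def, Finset.card_insert_of_notMem (by simp [Finset.mem_erase]; intro _; exact htp),
          Finset.card_erase_of_mem ht, hT]
        have : 0 < m := hT ▸ Finset.card_pos.mpr ⟨t, ht⟩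
        omega
      have htN : (t : ℕ) ≤ N := by
        rw [← hsum]
        exact Finset.single_le_sum (f := fun i : Fin n => (i : ℕ)) (fun i _ => Nat.zero_le _) ht
      have hsum2 : (∑ j ∈ T2, (j : ℕ)) = N - 1 := by
        rw [hT2def, Finset.sum_insert (by simp [Finset.mem_erase]; intro _; exact htp)]
        have h3 : (∑ x ∈ T.erase t, (x : ℕ)) + (t : ℕ) = ∑ x ∈ T, (x : ℕ) :=
          Finset.sum_erase_add T _ ht
        omega
      have hmem2c : ∀ y : Fin n, y ∈ T2ᶜ ↔ y = t ∨ (y ∈ Tᶜ ∧ y ≠ t') := by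
        intro y
        rw [Finset.mem_compl, hmem2, Finset.mem_compl]
        by_cases h1 : y = t <;> by_cases h2 : y = t' <;>
          simp [h1, h2, ht, htp, htt', Ne.symm htt']
      have hswapT : (fun a : Fin m => Equiv.swap t' t (T2.orderEmbOfFin hT2 a)) =
          ⇑(T.orderEmbOfFin hT) := by
        apply Finset.orderEmbOfFin_unique
        · intro a
          have hy := T2.orderEmbOfFin_mem hT2 a
          rcases (hmem2 _).1 hy with e | ⟨hyT, hyt⟩
          · rw [e, Equiv.swap_apply_left]; exact ht
          · rw [Equiv.swap_apply_of_ne_of_ne (fun h => htp (by rw [← h]; exact hyT)) hyt]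
            exact hyT
        · intro a b hab
          have h12 := (T2.orderEmbOfFin hT2).strictMono hab
          set y1 := T2.orderEmbOfFin hT2 a with hy1def
          set y2 := T2.orderEmbOfFin hT2 b with hy2def
          show Equiv.swap t' t y1 < Equiv.swap t' t y2
          have hy1 := (hmem2 y1).1 (T2.orderEmbOfFin_mem hT2 a)
          have hy2 := (hmem2 y2).1 (T2.orderEmbOfFin_mem hT2 b)
          rw [Fin.lt_def] at h12 ⊢
          rcases hy1 with e1 | ⟨m1, ne1⟩ <;> rcases hy2 with e2 | ⟨m2, ne2⟩
          · rw [e1, e2] at h12; omega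
          · rw [e1, Equiv.swap_apply_left,
              Equiv.swap_apply_of_ne_of_ne (fun h => htp (by rw [← h]; exact m2)) ne2]
            rw [e1] at h12
            have hne : (y2 : ℕ) ≠ (t : ℕ) := fun h => ne2 (Fin.ext h)
            omega
          · rw [e2, Equiv.swap_apply_left,
              Equiv.swap_apply_of_ne_of_ne (fun h => htp (by rw [← h]; exact m1)) ne1]
            rw [e2] at h12
            omega
          · rw [Equiv.swap_apply_of_ne_of_ne (fun h => htp (by rw [← h]; exact m1)) ne1,
              Equiv.swap_apply_of_ne_of_ne (fun h => htp (by rw [← h]; exact m2)) ne2]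
            exact h12
      have hswapC : (fun b : Fin (n - m) =>
            Equiv.swap t' t ((T2ᶜ).orderEmbOfFin (card_compl_eq T2 hT2) b)) =
          ⇑((Tᶜ).orderEmbOfFin (card_compl_eq T hT)) := by
        apply Finset.orderEmbOfFin_unique
        · intro b
          have hy := (T2ᶜ).orderEmbOfFin_mem (card_compl_eq T2 hT2) b
          rcases (hmem2c _).1 hy with e | ⟨hyT, hyt⟩
          · rw [e, Equiv.swap_apply_right]; simpa using htp
          · rw [Equiv.swap_apply_of_ne_of_ne hyt
              (fun h => (Finset.mem_compl.1 hyT) (by rw [h]; exact ht))]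
            exact hyT
        · intro a b hab
          have h12 := ((T2ᶜ).orderEmbOfFin (card_compl_eq T2 hT2)).strictMono hab
          set y1 := (T2ᶜ).orderEmbOfFin (card_compl_eq T2 hT2) a with hy1def
          set y2 := (T2ᶜ).orderEmbOfFin (card_compl_eq T2 hT2) b with hy2def
          show Equiv.swap t' t y1 < Equiv.swap t' t y2
          have hy1 := (hmem2c y1).1 ((T2ᶜ).orderEmbOfFin_mem (card_compl_eq T2 hT2) a)
          have hy2 := (hmem2c y2).1 ((T2ᶜ).orderEmbOfFin_mem (card_compl_eq T2 hT2) b)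
          rw [Fin.lt_def] at h12 ⊢
          rcases hy1 with e1 | ⟨m1, ne1⟩ <;> rcases hy2 with e2 | ⟨m2, ne2⟩
          · rw [e1, e2] at h12; omega
          · rw [e1, Equiv.swap_apply_right,
              Equiv.swap_apply_of_ne_of_ne ne2
                (fun h => (Finset.mem_compl.1 m2) (by rw [h]; exact ht))]
            rw [e1] at h12
            omega
          · rw [e2, Equiv.swap_apply_right,
              Equiv.swap_apply_of_ne_of_ne ne1
                (fun h => (Finset.mem_compl.1 m1) (by rw [h]; exact ht))]
            rw [e2] at h12
            have hne : (y1 : ℕ) ≠ (t' : ℕ) := fun h => ne1 (Fin.ext h)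
            omega
          · rw [Equiv.swap_apply_of_ne_of_ne ne1
                (fun h => (Finset.mem_compl.1 m1) (by rw [h]; exact ht)),
              Equiv.swap_apply_of_ne_of_ne ne2
                (fun h => (Finset.mem_compl.1 m2) (by rw [h]; exact ht))]
            exact h12
      have hcol : colE m hm T hT = (colE m hm T2 hT2).trans (Equiv.swap t' t) := by
        apply Equiv.ext
        rintro (a | b)
        · rw [Equiv.trans_apply, colE_inl, colE_inl, ← congrFun hswapT a]
        · rw [Equiv.trans_apply, colE_inr, colE_inr, ← congrFun hswapC b]
      have hrho : rho m hm T hT = Equiv.swap t' t * rho m hm T2 hT2 := by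
        rw [rho, hcol, ← Equiv.trans_assoc]; rfl
      have hih := ih (N - 1) (by omega) T2 hT2 hsum2
      rw [hrho, Equiv.Perm.sign_mul, Equiv.Perm.sign_swap htt', hih]
      have hNe : m * (m - 1) / 2 + N = (m * (m - 1) / 2 + (N - 1)) + 1 := by omega
      rw [hNe, pow_succ]
      exact mul_comm _ _

end LaplaceAux

namespace LaplaceAux
open Equiv Finset Matrix
variable {n : ℕ}

abbrev Idx (n m : ℕ) : Type :=
  Σ _T : {T : Finset (Fin n) // T ∈ Finset.powersetCard m (Finset.univ : Finset (Fin n))},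
    Equiv.Perm (Fin m) × Equiv.Perm (Fin (n - m))

lemma idx_card {m : ℕ} (x : Idx n m) : x.1.1.card = m :=
  (Finset.mem_powersetCard.mp x.1.2).2

def phi (m : ℕ) (hm : m ≤ n) (x : Idx n m) : Equiv.Perm (Fin n) :=
  ((rowE m hm).permCongr (Equiv.sumCongr x.2.1 x.2.2)).trans (rho m hm x.1.1 (idx_card x))

lemma phi_castLE (m : ℕ) (hm : m ≤ n) (x : Idx n m) (a : Fin m) :
    phi m hm x (Fin.castLE hm a) = x.1.1.orderEmbOfFin (idx_card x) (x.2.1 a) := by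
  rw [← rowE_inl m hm a]
  simp [phi, rho, Equiv.permCongr_apply, colE_inl]

lemma phi_natAdd (m : ℕ) (hm : m ≤ n) (x : Idx n m) (b : Fin (n - m)) :
    phi m hm x (⟨m + (b : ℕ), by omega⟩ : Fin n) =
      (x.1.1ᶜ).orderEmbOfFin (card_compl_eq _ (idx_card x)) (x.2.2 b) := by
  rw [← rowE_inr m hm b]
  simp [phi, rho, Equiv.permCongr_apply, colE_inr]

lemma sign_phi (m : ℕ) (hm : m ≤ n) (x : Idx n m) :
    Equiv.Perm.sign (phi m hm x) =
      Equiv.Perm.sign (rho m hm x.1.1 (idx_card x)) *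
        Equiv.Perm.sign x.2.1 * Equiv.Perm.sign x.2.2 := by
  have h1 : phi m hm x =
      rho m hm x.1.1 (idx_card x) * ((rowE m hm).permCongr (Equiv.sumCongr x.2.1 x.2.2)) := rfl
  rw [h1, Equiv.Perm.sign_mul, Equiv.Perm.sign_permCongr, Equiv.Perm.sign_sumCongr, mul_assoc]

lemma phi_injective (m : ℕ) (hm : m ≤ n) : Function.Injective (phi m hm) := by
  intro x y h
  have hsets : ∀ z : Idx n m,
      z.1.1 = Finset.image (fun a : Fin m => phi m hm z (Fin.castLE hm a)) Finset.univ := by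
    intro z
    have hsub : Finset.image (fun a : Fin m => phi m hm z (Fin.castLE hm a)) Finset.univ
        ⊆ z.1.1 := by
      intro j hj
      rw [Finset.mem_image] at hj
      obtain ⟨a, -, rfl⟩ := hj
      rw [phi_castLE]
      exact Finset.orderEmbOfFin_mem _ _ _
    have hinj : Function.Injective (fun a : Fin m => phi m hm z (Fin.castLE hm a)) := by
      intro a b hab
      simp only [phi_castLE] at hab
      exact z.2.1.injective ((z.1.1.orderEmbOfFin (idx_card z)).injective hab)
    have hcard : (Finset.image (fun a : Fin m => phi m hm z (Fin.castLE hm a))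
        Finset.univ).card = m := by
      rw [Finset.card_image_of_injective _ hinj, Finset.card_univ, Fintype.card_fin]
    exact (Finset.eq_of_subset_of_card_le hsub (by rw [hcard, idx_card z])).symm
  obtain ⟨⟨T, hT⟩, σ₁, σ₂⟩ := x
  obtain ⟨⟨T', hT'⟩, σ₁', σ₂'⟩ := y
  have hTT : T = T' := by
    have h1 : T = Finset.image
        (fun a : Fin m => phi m hm ⟨⟨T, hT⟩, σ₁, σ₂⟩ (Fin.castLE hm a)) Finset.univ :=
      hsets ⟨⟨T, hT⟩, σ₁, σ₂⟩
    have h2 : T' = Finset.image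
        (fun a : Fin m => phi m hm ⟨⟨T', hT'⟩, σ₁', σ₂'⟩ (Fin.castLE hm a)) Finset.univ :=
      hsets ⟨⟨T', hT'⟩, σ₁', σ₂'⟩
    rw [h1, h2, h]
  subst hTT
  have hc : T.card = m := (Finset.mem_powersetCard.mp hT).2
  have happ : ∀ z : Fin n,
      phi m hm ⟨⟨T, hT⟩, σ₁, σ₂⟩ z = phi m hm ⟨⟨T, hT'⟩, σ₁', σ₂'⟩ z := fun z => by rw [h]
  have hs1 : σ₁ = σ₁' := by
    apply Equiv.ext
    intro a
    have h3 := happ (Fin.castLE hm a)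
    rw [phi_castLE, phi_castLE] at h3
    exact (T.orderEmbOfFin hc).injective h3
  have hs2 : σ₂ = σ₂' := by
    apply Equiv.ext
    intro b
    have h3 := happ (⟨m + (b : ℕ), by omega⟩ : Fin n)
    rw [phi_natAdd, phi_natAdd] at h3
    exact ((Tᶜ).orderEmbOfFin (card_compl_eq _ hc)).injective h3
  rw [hs1, hs2]

lemma phi_bijective (m : ℕ) (hm : m ≤ n) : Function.Bijective (phi m hm) := by
  rw [Fintype.bijective_iff_injective_and_card]
  refine ⟨phi_injective m hm, ?_⟩
  rw [Fintype.card_sigma, Fintype.card_perm, Fintype.card_fin]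
  simp only [Fintype.card_prod, Fintype.card_perm, Fintype.card_fin, Finset.sum_const,
    smul_eq_mul]
  rw [Finset.card_univ, Fintype.card_coe, Finset.card_powersetCard, Finset.card_univ,
    Fintype.card_fin]
  rw [← Nat.choose_mul_factorial_mul_factorial hm, mul_assoc]

end LaplaceAux

namespace LaplaceAux
open Equiv Finset Matrix
variable {n : ℕ} {R : Type*} [CommRing R]

lemma det_eq_sum_col {p : ℕ} (M : Matrix (Fin p) (Fin p) R) :
    M.det = ∑ σ : Equiv.Perm (Fin p), ((Equiv.Perm.sign σ : ℤ) : R) * ∏ i, M i (σ i) := by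
  rw [← Matrix.det_transpose, Matrix.det_apply']
  rfl

theorem laplace_general (m : ℕ) (hm : m ≤ n) (B : Matrix (Fin n) (Fin n) R) :
    B.det = ∑ T ∈ (Finset.powersetCard m (Finset.univ : Finset (Fin n))).attach,
      (-1 : R) ^ (m * (m - 1) / 2 + ∑ j ∈ T.1, (j : ℕ)) *
        (B.submatrix (Fin.castLE hm)
          (T.1.orderEmbOfFin ((Finset.mem_powersetCard.mp T.2).2))).det *
        (B.submatrix (fun i : Fin (n - m) => (⟨m + (i : ℕ), by have := i.isLt; omega⟩ : Fin n))
          ((T.1)ᶜ.orderEmbOfFin (card_compl_eq _ ((Finset.mem_powersetCard.mp T.2).2)))).det := by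
  rw [det_eq_sum_col]
  rw [← Fintype.sum_bijective (phi m hm) (phi_bijective m hm)
      (fun x => ((Equiv.Perm.sign (phi m hm x) : ℤ) : R) * ∏ i, B i (phi m hm x i))
      (fun σ => ((Equiv.Perm.sign σ : ℤ) : R) * ∏ i, B i (σ i)) (fun x => rfl)]
  rw [← Finset.univ_sigma_univ, Finset.sum_sigma, Finset.univ_eq_attach]
  apply Finset.sum_congr rfl
  intro T _
  rw [Fintype.sum_prod_type]
  have hc : T.1.card = m := (Finset.mem_powersetCard.mp T.2).2
  have key : ∀ (σ₁ : Equiv.Perm (Fin m)) (σ₂ : Equiv.Perm (Fin (n - m))),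
      ((Equiv.Perm.sign (phi m hm ⟨T, σ₁, σ₂⟩) : ℤ) : R) *
          ∏ i, B i (phi m hm ⟨T, σ₁, σ₂⟩ i) =
        (-1 : R) ^ (m * (m - 1) / 2 + ∑ j ∈ T.1, (j : ℕ)) *
          (((Equiv.Perm.sign σ₁ : ℤ) : R) *
            ∏ a, (B.submatrix (Fin.castLE hm) (T.1.orderEmbOfFin hc)) a (σ₁ a)) *
          (((Equiv.Perm.sign σ₂ : ℤ) : R) *
            ∏ b, (B.submatrix
              (fun i : Fin (n - m) => (⟨m + (i : ℕ), by have := i.isLt; omega⟩ : Fin n))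
              ((T.1)ᶜ.orderEmbOfFin (card_compl_eq _ hc))) b (σ₂ b)) := by
    intro σ₁ σ₂
    have hsign : Equiv.Perm.sign (phi m hm ⟨T, σ₁, σ₂⟩) =
        (-1) ^ (m * (m - 1) / 2 + ∑ j ∈ T.1, (j : ℕ)) *
          Equiv.Perm.sign σ₁ * Equiv.Perm.sign σ₂ := by
      rw [sign_phi, sign_rho m hm _ T.1 (idx_card ⟨T, σ₁, σ₂⟩) rfl]
    have hprod : (∏ i, B i (phi m hm ⟨T, σ₁, σ₂⟩ i)) =
        (∏ a, (B.submatrix (Fin.castLE hm) (T.1.orderEmbOfFin hc)) a (σ₁ a)) *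
          ∏ b, (B.submatrix
            (fun i : Fin (n - m) => (⟨m + (i : ℕ), by have := i.isLt; omega⟩ : Fin n))
            ((T.1)ᶜ.orderEmbOfFin (card_compl_eq _ hc))) b (σ₂ b) := by
      rw [← Equiv.prod_comp (rowE m hm) (fun i => B i (phi m hm ⟨T, σ₁, σ₂⟩ i)),
        Fintype.prod_sum_type]
      congr 1
      · apply Finset.prod_congr rfl
        intro a _
        rw [rowE_inl, phi_castLE]
        rfl
      · apply Finset.prod_congr rfl
        intro b _
        rw [rowE_inr, phi_natAdd]
        rfl
    rw [hsign, hprod]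
    push_cast
    ring
  rw [Finset.sum_congr rfl (fun σ₁ _ => Finset.sum_congr rfl (fun σ₂ _ => key σ₁ σ₂))]
  rw [det_eq_sum_col (B.submatrix (Fin.castLE hm) (T.1.orderEmbOfFin hc)),
    det_eq_sum_col (B.submatrix
      (fun i : Fin (n - m) => (⟨m + (i : ℕ), by have := i.isLt; omega⟩ : Fin n))
      ((T.1)ᶜ.orderEmbOfFin (card_compl_eq _ hc)))]
  symm
  rw [mul_assoc, Finset.sum_mul_sum, Finset.mul_sum]
  apply Finset.sum_congr rfl
  intro σ₁ _
  rw [Finset.mul_sum]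
  apply Finset.sum_congr rfl
  intro σ₂ _
  ring

end LaplaceAux

open Equiv Finset Matrix LaplaceAux

/-- **The paper's Lemma 1.** Let `B` be an `n × n` matrix over a commutative ring `R`,
`m ≤ n`, `k ≤ l ≤ n`, with `B i j = 0` whenever `i < m` and `j ≥ l`, and
`B i j = 0` whenever `i ≥ m` and `j < k`.  Then in the Laplace expansion of `det B`
along the first `m` rows, only the column subsets `T` of cardinality `m` with
`{0, …, k-1} ⊆ T ⊆ {0, …, l-1}` contribute:
`det B = Σ_T (-1)^(m(m-1)/2 + Σ_{j∈T} j) · det B[{0,…,m-1}, T] · det B[{m,…,n-1}, Tᶜ]`. -/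
theorem laplace_expansion_block (R : Type*) [CommRing R] (n m k l : ℕ) (hm : m ≤ n)
    (hkl : k ≤ l) (hl : l ≤ n) (B : Matrix (Fin n) (Fin n) R)
    (htop : ∀ i j : Fin n, (i : ℕ) < m → l ≤ (j : ℕ) → B i j = 0)
    (hbot : ∀ i j : Fin n, m ≤ (i : ℕ) → (j : ℕ) < k → B i j = 0) :
    B.det =
      ∑ T ∈ ((Finset.powersetCard m (Finset.univ : Finset (Fin n))).filter
          (fun T => (Finset.univ.filter (fun j : Fin n => (j : ℕ) < k)) ⊆ T ∧
            T ⊆ Finset.univ.filter (fun j : Fin n => (j : ℕ) < l))).attach,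
        (-1 : R) ^ (m * (m - 1) / 2 + ∑ j ∈ T.1, (j : ℕ)) *
          (B.submatrix (Fin.castLE hm)
              (T.1.orderEmbOfFin
                ((Finset.mem_powersetCard.mp (Finset.mem_filter.mp T.2).1).2))).det *
          (B.submatrix
              (fun i : Fin (n - m) => (⟨m + (i : ℕ), by have := i.isLt; omega⟩ : Fin n))
              ((T.1)ᶜ.orderEmbOfFin (by
                have h := (Finset.mem_powersetCard.mp (Finset.mem_filter.mp T.2).1).2
                simp [Finset.card_compl, h]))).det := by
  classical
  rw [laplace_general m hm B]
  set p : Finset (Fin n) → Prop := fun T =>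
    (Finset.univ.filter (fun j : Fin n => (j : ℕ) < k)) ⊆ T ∧
      T ⊆ Finset.univ.filter (fun j : Fin n => (j : ℕ) < l) with hp
  -- restrict the sum to subsets satisfying `p`
  rw [← Finset.sum_filter_of_ne
    (p := fun T : {T // T ∈ Finset.powersetCard m (Finset.univ : Finset (Fin n))} => p T.1)
    (by
      intro T _ hne
      by_contra hpT
      apply hne
      have hc : T.1.card = m := (Finset.mem_powersetCard.mp T.2).2
      rw [hp] at hpT
      by_cases h2 : T.1 ⊆ Finset.univ.filter (fun j : Fin n => (j : ℕ) < l)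
      · -- then the first inclusion fails
        have h1 : ¬ (Finset.univ.filter (fun j : Fin n => (j : ℕ) < k)) ⊆ T.1 := by tauto
        obtain ⟨j, hjk, hjT⟩ := Finset.not_subset.1 h1
        rw [Finset.mem_filter] at hjk
        have hjc : j ∈ ((T.1)ᶜ : Finset (Fin n)) := Finset.mem_compl.2 hjT
        have : j ∈ Set.range ((T.1)ᶜ.orderEmbOfFin (card_compl_eq _ hc)) := by
          rw [Finset.range_orderEmbOfFin]; exact hjc
        obtain ⟨b, hb⟩ := this
        have hdet0 : (B.submatrix
            (fun i : Fin (n - m) => (⟨m + (i : ℕ), by have := i.isLt; omega⟩ : Fin n))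
            ((T.1)ᶜ.orderEmbOfFin (card_compl_eq _ hc))).det = 0 := by
          apply Matrix.det_eq_zero_of_column_eq_zero b
          intro i
          rw [Matrix.submatrix_apply, hb]
          exact hbot _ _ (by simp) hjk.2
        rw [hdet0, mul_zero]
      · obtain ⟨j, hjT, hjl⟩ := Finset.not_subset.1 h2
        rw [Finset.mem_filter] at hjl
        push_neg at hjl
        have : j ∈ Set.range (T.1.orderEmbOfFin hc) := by
          rw [Finset.range_orderEmbOfFin]; exact hjT
        obtain ⟨a, ha⟩ := this
        have hdet0 : (B.submatrix (Fin.castLE hm) (T.1.orderEmbOfFin hc)).det = 0 := by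
          apply Matrix.det_eq_zero_of_column_eq_zero a
          intro i
          rw [Matrix.submatrix_apply, ha]
          exact htop _ _ (by simpa using i.isLt) (hjl (Finset.mem_univ j))
        rw [hdet0, mul_zero, zero_mul])]
  -- now a bijection between the two attached index sets
  refine Finset.sum_bij'
    (fun T hT => (⟨T.1, Finset.mem_filter.2 ⟨T.2, (Finset.mem_filter.1 hT).2⟩⟩ :
      {T // T ∈ (Finset.powersetCard m (Finset.univ : Finset (Fin n))).filter _}))
    (fun T _ => ⟨T.1, (Finset.mem_filter.1 T.2).1⟩) ?_ ?_ ?_ ?_ ?_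
  · intro a ha; exact Finset.mem_attach _ _
  · intro a ha
    rw [Finset.mem_filter]
    refine ⟨Finset.mem_attach _ _, ?_⟩
    exact (Finset.mem_filter.1 a.2).2
  all_goals intro a ha
  all_goals rfl
end

section
/- Let R be a commutative ring, n and m natural numbers with m ≤ n, I a finite index set, (aᵢ)_{i∈I} scalars in R, and (Bᵢ)_{i∈I} a family of n × n matrices over R that all agree on rows m, m+1, …, n−1 (i.e., for every i, i' ∈ I and every row index r ≥ m, row r of Bᵢ equals row r of Bᵢ'). If for every subset T of {0, …, n−1} of cardinality m one has Σ_{i∈I} aᵢ · det(Bᵢ[{0,…,m−1}, T]) = 0, then Σ_{i∈I} aᵢ · det(Bᵢ) = 0. (The paper's Lemma 2: to prove a linear relation among determinants of matrices sharing a common bottom block, it suffices to verify the relation on the corresponding minors of the top blocks.) -/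
open Matrix

section Aux

variable {R : Type*} [CommRing R] {n m : ℕ}

/-- The matrix whose first `m` rows are given by `v` and remaining rows come from `M0`. -/
private def auxRows (hm : m ≤ n) (M0 : Matrix (Fin n) (Fin n) R)
    (v : Fin m → Fin n → R) : Matrix (Fin n) (Fin n) R :=
  Matrix.of fun r => if h : (r : ℕ) < m then v ⟨r, h⟩ else M0 r

private lemma auxRows_update [DecidableEq (Fin m)] (hm : m ≤ n) (M0 : Matrix (Fin n) (Fin n) R)
    (v : Fin m → Fin n → R) (j : Fin m) (x : Fin n → R) :
    auxRows hm M0 (Function.update v j x)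
      = (auxRows hm M0 v).updateRow (Fin.castLE hm j) x := by
  ext r c
  by_cases hr : r = Fin.castLE hm j
  · subst hr
    simp [auxRows, Matrix.updateRow_self, j.isLt, Fin.castLE]
  · rw [Matrix.updateRow_ne hr]
    simp only [auxRows, Matrix.of_apply]
    by_cases h : (r : ℕ) < m
    · rw [dif_pos h, dif_pos h, Function.update_of_ne]
      intro hrj
      exact hr (by apply Fin.ext; simpa using congrArg Fin.val hrj)
    · rw [dif_neg h, dif_neg h]

/-- Alternating map in the top `m` rows, with bottom rows fixed to those of `M0`. -/
private def auxF (hm : m ≤ n) (M0 : Matrix (Fin n) (Fin n) R) :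
    (Fin n → R) [⋀^Fin m]→ₗ[R] R where
  toFun v := (auxRows hm M0 v).det
  map_update_add' v j x y := by
    simp [auxRows_update, Matrix.det_updateRow_add]
  map_update_smul' v j c x := by
    simp [auxRows_update, Matrix.det_updateRow_smul]
  map_eq_zero_of_eq' v i j hv hij := by
    refine Matrix.det_zero_of_row_eq (i := Fin.castLE hm i) (j := Fin.castLE hm j)
      (fun h => hij (Fin.castLE_injective hm h)) ?_
    have key : ∀ k : Fin m, auxRows hm M0 v (Fin.castLE hm k) = v k := by
      intro k
      show (if h : ((Fin.castLE hm k : Fin n) : ℕ) < m then v ⟨_, h⟩ else M0 _) = v k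
      rw [dif_pos (show ((Fin.castLE hm k : Fin n) : ℕ) < m from k.isLt)]
      exact congrArg v (Fin.ext rfl)
    rw [key i, key j, hv]

private lemma sum_alt_apply {α : Type*} (s : Finset α)
    (f : α → ((Fin n → R) [⋀^Fin m]→ₗ[R] R)) (v : Fin m → Fin n → R) :
    (∑ x ∈ s, f x) v = ∑ x ∈ s, f x v := by
  classical
  induction s using Finset.induction with
  | empty => simp
  | insert _ _ h ih => rw [Finset.sum_insert h, Finset.sum_insert h, AlternatingMap.add_apply, ih]

end Aux

/-- **The paper's Lemma 2.** Let `(Bᵢ)_{i ∈ I}` be a finite family of `n × n`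
matrices over a commutative ring `R`, all agreeing on the rows `m, …, n-1`, and
let `(aᵢ)` be scalars.  If for every column subset `T` of cardinality `m` the
linear relation `Σᵢ aᵢ · det Bᵢ[{0,…,m-1}, T] = 0` holds among the top minors,
then `Σᵢ aᵢ · det Bᵢ = 0`. -/
theorem det_linear_relation_of_minor_relation (R : Type*) [CommRing R]
    (n m : ℕ) (hm : m ≤ n) (I : Type*) [Fintype I] (a : I → R)
    (B : I → Matrix (Fin n) (Fin n) R)
    (hrows : ∀ i i' : I, ∀ r : Fin n, m ≤ (r : ℕ) → B i r = B i' r)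
    (hminors : ∀ (T : Finset (Fin n)) (hT : T.card = m),
      ∑ i, a i * ((B i).submatrix (Fin.castLE hm) (T.orderEmbOfFin hT)).det = 0) :
    ∑ i, a i * (B i).det = 0 := by
  classical
  rcases isEmpty_or_nonempty I with hI | ⟨⟨i₀⟩⟩
  · simp
  set e := Pi.basisFun R (Fin n) with he
  set F : (Fin n → R) [⋀^Fin m]→ₗ[R] R := auxF hm (B i₀) with hF
  set G : (Fin n → R) [⋀^Fin m]→ₗ[R] R :=
    ∑ T : {T : Finset (Fin n) // T.card = m},
      F (fun j => e (T.1.orderEmbOfFin T.2 j)) •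
        (Matrix.detRowAlternating.compLinearMap
          (LinearMap.funLeft R R (T.1.orderEmbOfFin T.2))) with hG
  -- F = G by checking on distinct basis vectors
  have hFG : F = G := by
    refine Module.Basis.ext_alternating e fun u hu => ?_
    set T₀ : Finset (Fin n) := Finset.univ.image u with hT₀def
    have hT₀ : T₀.card = m := by
      rw [hT₀def, Finset.card_image_of_injective _ hu, Finset.card_univ, Fintype.card_fin]
    set emb := T₀.orderEmbOfFin hT₀ with hemb
    have hmemT₀ : ∀ j, u j ∈ T₀ := fun j => Finset.mem_image_of_mem u (Finset.mem_univ j)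
    set s : Fin m → Fin m := fun j => (T₀.orderIsoOfFin hT₀).symm ⟨u j, hmemT₀ j⟩ with hs
    have hembs : ∀ j, emb (s j) = u j := by
      intro j
      rw [hemb, ← Finset.coe_orderIsoOfFin_apply]
      simp [hs]
    have hsinj : Function.Injective s := by
      intro j j' h
      apply hu
      rw [← hembs j, ← hembs j', h]
    set σ : Equiv.Perm (Fin m) :=
      Equiv.ofBijective s (Finite.injective_iff_bijective.mp hsinj) with hσ
    have hσap : ∀ j, σ j = s j := fun _ => rfl
    -- LHS
    have hL : F (fun j => e (u j)) = Equiv.Perm.sign σ • F (fun j => e (emb j)) := by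
      have : (fun j => e (u j)) = (fun j => e (emb j)) ∘ σ := by
        funext j
        simp [hσap, hembs j]
      rw [this, AlternatingMap.map_perm]
    -- RHS
    rw [hG]
    rw [sum_alt_apply]
    rw [Finset.sum_eq_single ⟨T₀, hT₀⟩]
    · rw [AlternatingMap.smul_apply, AlternatingMap.compLinearMap_apply]
      have hmat : Matrix.of (fun r c => (LinearMap.funLeft R R emb (e (u r))) c)
          = (σ.toPEquiv.toMatrix : Matrix (Fin m) (Fin m) R) := by
        ext r c
        simp only [Matrix.of_apply, LinearMap.funLeft_apply, PEquiv.toMatrix_apply,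
          Equiv.toPEquiv_apply, Option.mem_def, Option.some.injEq]
        rw [he, Pi.basisFun_apply, ← hembs r, Pi.single_apply, hσap]
        by_cases h : s r = c
        · rw [if_pos h, if_pos (by rw [h])]
        · rw [if_neg h, if_neg (fun hc => h (emb.injective hc.symm))]
      rw [hL]
      rw [show Matrix.detRowAlternating (fun j => LinearMap.funLeft R R emb (e (u j)))
            = Matrix.det (σ.toPEquiv.toMatrix : Matrix (Fin m) (Fin m) R) from
          congrArg Matrix.det hmat]
      rw [Matrix.det_permutation]
      rcases Int.units_eq_one_or (Equiv.Perm.sign σ) with h1 | h1 <;>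
        simp [h1, smul_eq_mul, mul_comm] <;> rfl
    · intro T _ hT
      rw [AlternatingMap.smul_apply, AlternatingMap.compLinearMap_apply]
      have : ∃ r, u r ∉ T.1 := by
        by_contra hc
        push_neg at hc
        apply hT
        have hsub : T₀ ⊆ T.1 := by
          intro x hx
          rw [hT₀def, Finset.mem_image] at hx
          obtain ⟨j, _, rfl⟩ := hx
          exact hc j
        have := Finset.eq_of_subset_of_card_le hsub (by rw [hT₀, T.2])
        exact Subtype.ext this.symm
      obtain ⟨r, hr⟩ := this
      have : Matrix.detRowAlternating (fun j => LinearMap.funLeft R R (T.1.orderEmbOfFin T.2) (e (u j))) = 0 := by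
        show Matrix.det _ = 0
        apply Matrix.det_eq_zero_of_row_eq_zero r
        intro c
        simp only [Matrix.of_apply, LinearMap.funLeft_apply]
        rw [he, Pi.basisFun_apply, Pi.single_apply, if_neg]
        exact fun hc => hr (hc ▸ Finset.orderEmbOfFin_mem T.1 T.2 c)
      rw [this, smul_zero]
    · intro h
      exact absurd (Finset.mem_univ _) h
  -- now compute
  have hdet : ∀ i, (B i).det = F (fun j => B i (Fin.castLE hm j)) := by
    intro i
    rw [hF]
    show _ = (auxRows hm (B i₀) _).det
    congr 1
    ext r c
    simp only [auxRows, Matrix.of_apply]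
    by_cases h : (r : ℕ) < m
    · rw [dif_pos h]
      exact congrFun (congrArg (B i) (Fin.ext rfl)) c
    · rw [dif_neg h]
      rw [hrows i₀ i r (le_of_not_gt h)]
  calc ∑ i, a i * (B i).det
      = ∑ i, a i * G (fun j => B i (Fin.castLE hm j)) := by
        simp_rw [hdet, hFG]
    _ = ∑ i, a i * ∑ T : {T : Finset (Fin n) // T.card = m},
          F (fun j => e (T.1.orderEmbOfFin T.2 j)) *
            ((B i).submatrix (Fin.castLE hm) (T.1.orderEmbOfFin T.2)).det := by
        refine Finset.sum_congr rfl fun i _ => ?_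
        rw [hG, sum_alt_apply]
        congr 1
    _ = ∑ T : {T : Finset (Fin n) // T.card = m},
          F (fun j => e (T.1.orderEmbOfFin T.2 j)) *
            (∑ i, a i * ((B i).submatrix (Fin.castLE hm) (T.1.orderEmbOfFin T.2)).det) := by
        simp_rw [Finset.mul_sum]
        rw [Finset.sum_comm]
        refine Finset.sum_congr rfl fun T _ => Finset.sum_congr rfl fun i _ => by ring
    _ = 0 := by
      apply Finset.sum_eq_zero
      intro T _
      rw [hminors T.1 T.2, mul_zero]
end

section
/- Let R be a commutative ring, M an n × n matrix over R, j a fixed column index with j < n, and c, c' : {0,…,n−1} → R two column vectors with c(i) + c'(i) = M i j for every row index i < n. Define the (n+1) × (n+1) matrix M' by: for i < n, M' i l = M i l for every column l < n with l ≠ j, M' i j = c(i), and M' i n = c'(i); and in the last row, M' n j = −1, M' n n = 1, and M' n l = 0 for all other columns l. Then det(M') = det(M). (The paper's claim that splitting a column of the weight-system matrix into two columns summing to it, while adjoining a new row with entries −1 and 1 in the two split columns and 0 elsewhere, does not change the determinant.) -/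
open Matrix

/-- **Splitting a column does not change the determinant.**
Let `M` be an `n × n` matrix over a commutative ring `R`, `j` a column index, and
`c, c'` column vectors with `c i + c' i = M i j` for all `i`.  Form the
`(n+1) × (n+1)` matrix `M'` by replacing column `j` of `M` by `c`, adjoining `c'`
as a new last column, and adjoining a new last row whose entries are `-1` in
column `j`, `1` in the new column, and `0` elsewhere.  Then `det M' = det M`. -/
theorem det_split_column (R : Type*) [CommRing R] (n : ℕ)
    (M : Matrix (Fin n) (Fin n) R) (j : Fin n) (c c' : Fin n → R)
    (hsum : ∀ i : Fin n, c i + c' i = M i j)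
    (M' : Matrix (Fin (n + 1)) (Fin (n + 1)) R)
    (hold : ∀ (i l : Fin n), l ≠ j → M' i.castSucc l.castSucc = M i l)
    (hc : ∀ i : Fin n, M' i.castSucc j.castSucc = c i)
    (hc' : ∀ i : Fin n, M' i.castSucc (Fin.last n) = c' i)
    (hrowj : M' (Fin.last n) j.castSucc = -1)
    (hrowlast : M' (Fin.last n) (Fin.last n) = 1)
    (hrow0 : ∀ l : Fin n, l ≠ j → M' (Fin.last n) l.castSucc = 0) :
    M'.det = M.det := by
  have hne : (j.castSucc : Fin (n+1)) ≠ Fin.last n := Fin.castSucc_lt_last j |>.ne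
  have key := Matrix.det_updateCol_add_self M' hne
  set N : Matrix (Fin (n+1)) (Fin (n+1)) R :=
    M'.updateCol j.castSucc (fun k => M' k j.castSucc + M' k (Fin.last n)) with hN
  have hNeq : N = (Matrix.reindex finSumFinEquiv finSumFinEquiv)
      (Matrix.fromBlocks M (fun i (_ : Fin 1) => c' i) 0 (1 : Matrix (Fin 1) (Fin 1) R)) := by
    ext a b
    refine Fin.lastCases ?_ ?_ a <;> [skip; intro i] <;>
      refine Fin.lastCases ?_ ?_ b <;> try intro l
    · -- a = last, b = last
      simp [hN, Matrix.updateCol_ne hne.symm]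
      have : finSumFinEquiv.symm (Fin.last n) = Sum.inr 0 := by
        rw [show (Fin.last n) = Fin.natAdd n 0 by ext; simp]
        exact finSumFinEquiv_symm_apply_natAdd 0
      simp [this, hrowlast]
      rfl
    · -- a = last, b = l.castSucc
      have hsym : finSumFinEquiv.symm l.castSucc = Sum.inl l := by
        rw [show (l.castSucc : Fin (n+1)) = Fin.castAdd 1 l from rfl]
        exact finSumFinEquiv_symm_apply_castAdd l
      have hlast : finSumFinEquiv.symm (Fin.last n) = Sum.inr 0 := by
        rw [show (Fin.last n) = Fin.natAdd n 0 by ext; simp]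
        exact finSumFinEquiv_symm_apply_natAdd 0
      by_cases hl : l = j
      · subst hl
        simp [hN, Matrix.updateCol_self, hrowj, hrowlast, hsym, hlast]
        rfl
      · simp [hN, Matrix.updateCol_ne
          (fun h => hl (Fin.castSucc_injective n h)), hsym, hrow0 l hl]
        rfl
    · -- a = i.castSucc, b = last
      have hsymi : finSumFinEquiv.symm i.castSucc = Sum.inl i := by
        rw [show (i.castSucc : Fin (n+1)) = Fin.castAdd 1 i from rfl]
        exact finSumFinEquiv_symm_apply_castAdd i
      have hlast : finSumFinEquiv.symm (Fin.last n) = Sum.inr 0 := by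
        rw [show (Fin.last n) = Fin.natAdd n 0 by ext; simp]
        exact finSumFinEquiv_symm_apply_natAdd 0
      simp [hN, Matrix.updateCol_ne hne.symm, hsymi, hlast, hc' i]
      rfl
    · -- a = i.castSucc, b = l.castSucc
      have hsymi : finSumFinEquiv.symm i.castSucc = Sum.inl i := by
        rw [show (i.castSucc : Fin (n+1)) = Fin.castAdd 1 i from rfl]
        exact finSumFinEquiv_symm_apply_castAdd i
      have hsyml : finSumFinEquiv.symm l.castSucc = Sum.inl l := by
        rw [show (l.castSucc : Fin (n+1)) = Fin.castAdd 1 l from rfl]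
        exact finSumFinEquiv_symm_apply_castAdd l
      by_cases hl : l = j
      · subst hl
        simp [hN, Matrix.updateCol_self, hc i, hc' i, hsum i, hsymi, hsyml]
        rfl
      · simp [hN, Matrix.updateCol_ne
          (fun h => hl (Fin.castSucc_injective n h)), hsymi, hsyml, hold i l hl]
        rfl
  calc M'.det = N.det := key.symm
    _ = M.det := by
      rw [hNeq]
      simp [Matrix.det_fromBlocks_zero₂₁ (B := fun i (_ : Fin 1) => c' i), Matrix.det_fin_one]
end
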